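/- arXiv:1407.3343 — 3 statements merged into one kernel-verified Lean document; each statement's English description precedes it below -/
import Mathlib

section
/- Let K be a commutative ring and v, w : ℕ → K. Define A(n,k) by A(0,0)=1, A(0,n)=0 for n≥1, A(n,0)=∏_{i=0}^{n-1}(v_i + w_0), and A(n,k) = A(n-1,k-1) + (v_{n-1} + w_k)·A(n-1,k) for n,k ≥ 1. Then A(n,k) = ∑_{0 ≤ i_1 < i_2 < ... < i_{n-k} ≤ n-1} ∏_{j=1}^{n-k} (v_{i_j} + w_{i_j - j + 1}). -/
open Finset

/-- The generalized two-weight array `A^{v,w}(n,k)`. -/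
def A {K : Type*} [CommRing K] (v w : ℕ → K) : ℕ → ℕ → K
  | 0, 0 => 1
  | 0, _ + 1 => 0
  | n + 1, 0 => (v n + w 0) * A v w n 0
  | n + 1, k + 1 => A v w n k + (v n + w (k + 1)) * A v w n (k + 1)

/-- The sum side. -/
def S {K : Type*} [CommRing K] (v w : ℕ → K) (n m : ℕ) : K :=
  ∑ f ∈ (Finset.univ : Finset (Fin m → Fin n)).filter
      (fun f => ∀ a b : Fin m, a < b → f a < f b),
    ∏ j : Fin m, (v (f j) + w ((f j : ℕ) - (j : ℕ)))

lemma A_eq_zero {K : Type*} [CommRing K] (v w : ℕ → K) :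
    ∀ n k : ℕ, n < k → A v w n k = 0 := by
  intro n
  induction n with
  | zero =>
    intro k hk
    match k, hk with
    | k + 1, _ => rfl
  | succ n ih =>
    intro k hk
    match k, hk with
    | k + 1, hk =>
      rw [A, ih k (by omega), ih (k+1) (by omega)]
      ring

lemma S_zero {K : Type*} [CommRing K] (v w : ℕ → K) (n : ℕ) : S v w n 0 = 1 := by
  simp [S]

lemma S_eq_zero {K : Type*} [CommRing K] (v w : ℕ → K) {n m : ℕ} (h : n < m) :
    S v w n m = 0 := by
  rw [S]
  convert Finset.sum_empty
  ext f
  simp only [mem_filter, mem_univ, true_and, notMem_empty, iff_false]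
  intro hf
  have : Function.Injective f := (show StrictMono f from hf).injective
  have := Fintype.card_le_of_injective f this
  simp at this
  omega

lemma S_succ {K : Type*} [CommRing K] (v w : ℕ → K) (n m : ℕ) :
    S v w (n+1) (m+1) = S v w n (m+1) + (v n + w (n - m)) * S v w n m := by
  rw [S]
  rw [← Finset.sum_filter_add_sum_filter_not _
    (fun f : Fin (m+1) → Fin (n+1) => f (Fin.last m) = Fin.last n)]
  have key : ∀ f : Fin (m+1) → Fin (n+1), StrictMono f → f (Fin.last m) ≠ Fin.last n →
      ∀ j : Fin (m+1), (f j : ℕ) < n := by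
    intro f hf hne j
    have h1 : f j ≤ f (Fin.last m) := hf.monotone (Fin.le_last j)
    have h2 : f (Fin.last m) < Fin.last n := lt_of_le_of_ne (Fin.le_last _) hne
    exact lt_of_le_of_lt h1 h2
  have e2 : (((Finset.univ : Finset (Fin (m+1) → Fin (n+1))).filter
        (fun f => ∀ a b : Fin (m+1), a < b → f a < f b)).filter
        (fun f => ¬ f (Fin.last m) = Fin.last n))
      = ((Finset.univ : Finset (Fin (m+1) → Fin n)).filter
        (fun f => ∀ a b : Fin (m+1), a < b → f a < f b)).image
        (fun g => Fin.castSucc ∘ g) := by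
    ext f
    simp only [mem_filter, mem_univ, true_and, mem_image]
    constructor
    · rintro ⟨hmono, hne⟩
      refine ⟨fun j => ⟨(f j : ℕ), key f hmono hne j⟩, ?_, ?_⟩
      · intro a b hab
        exact hmono a b hab
      · funext j
        exact Fin.ext rfl
    · rintro ⟨g, hg, rfl⟩
      constructor
      · intro a b hab
        exact hg a b hab
      · intro h
        have h2 : ((g (Fin.last m)) : ℕ) = n := congrArg Fin.val h
        exact absurd h2 (Nat.ne_of_lt (g (Fin.last m)).isLt)
  have e1 : (((Finset.univ : Finset (Fin (m+1) → Fin (n+1))).filter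
        (fun f => ∀ a b : Fin (m+1), a < b → f a < f b)).filter
        (fun f => f (Fin.last m) = Fin.last n))
      = ((Finset.univ : Finset (Fin m → Fin n)).filter
        (fun f => ∀ a b : Fin m, a < b → f a < f b)).image
        (fun g => Fin.snoc (Fin.castSucc ∘ g) (Fin.last n)) := by
    ext f
    simp only [mem_filter, mem_univ, true_and, mem_image]
    constructor
    · rintro ⟨hmono, hlast⟩
      have hlt : ∀ j : Fin m, (f j.castSucc : ℕ) < n := by
        intro j
        have h3 : f j.castSucc < f (Fin.last m) := hmono _ _ (Fin.castSucc_lt_last j)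
        rw [hlast] at h3
        exact h3
      refine ⟨fun j => ⟨(f j.castSucc : ℕ), hlt j⟩, ?_, ?_⟩
      · intro a b hab
        exact hmono _ _ hab
      · funext j
        refine Fin.lastCases ?_ ?_ j
        · exact (Fin.snoc_last _ _).trans hlast.symm
        · intro i
          rw [Fin.snoc_castSucc]
          exact Fin.ext rfl
    · rintro ⟨g, hg, rfl⟩
      constructor
      · intro a b hab
        rcases Fin.eq_castSucc_or_eq_last b with ⟨ib, rfl⟩ | rfl
        · rcases Fin.eq_castSucc_or_eq_last a with ⟨ia, rfl⟩ | rfl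
          · simp only [Fin.snoc_castSucc, Function.comp_apply]
            exact hg _ _ hab
          · exact absurd hab (Fin.castSucc_lt_last ib).asymm
        · rcases Fin.eq_castSucc_or_eq_last a with ⟨ia, rfl⟩ | rfl
          · simp only [Fin.snoc_castSucc, Fin.snoc_last, Function.comp_apply]
            exact Fin.castSucc_lt_last _
          · exact absurd hab (lt_irrefl _)
      · simp
  have hinj1 : ∀ g1 ∈ (Finset.univ : Finset (Fin m → Fin n)).filter
      (fun f => ∀ a b : Fin m, a < b → f a < f b), ∀ g2 ∈ (Finset.univ : Finset (Fin m → Fin n)).filter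
      (fun f => ∀ a b : Fin m, a < b → f a < f b),
      (Fin.snoc (Fin.castSucc ∘ g1) (Fin.last n) : Fin (m+1) → Fin (n+1))
        = Fin.snoc (Fin.castSucc ∘ g2) (Fin.last n) → g1 = g2 := by
    intro g1 _ g2 _ h
    funext j
    have h2 := congrFun h j.castSucc
    simp only [Fin.snoc_castSucc, Function.comp_apply] at h2
    exact Fin.castSucc_injective _ h2
  have hinj2 : ∀ g1 ∈ (Finset.univ : Finset (Fin (m+1) → Fin n)).filter
      (fun f => ∀ a b : Fin (m+1), a < b → f a < f b), ∀ g2 ∈ (Finset.univ : Finset (Fin (m+1) → Fin n)).filter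
      (fun f => ∀ a b : Fin (m+1), a < b → f a < f b),
      (fun g => Fin.castSucc ∘ g) g1 = (fun g => Fin.castSucc ∘ g) g2 → g1 = g2 := by
    intro g1 _ g2 _ h
    funext j
    exact Fin.castSucc_injective _ (congrFun h j)
  rw [e1, e2, Finset.sum_image hinj1, Finset.sum_image hinj2,
    add_comm (S v w n (m+1))]
  congr 1
  · rw [S, Finset.mul_sum]
    apply Finset.sum_congr rfl
    intro g _
    rw [Fin.prod_univ_castSucc]
    simp only [Fin.snoc_castSucc, Fin.snoc_last, Function.comp_apply,
      Fin.coe_castSucc, Fin.val_last]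
    ring

theorem stmt_0 {K : Type*} [CommRing K] (v w : ℕ → K) (n k : ℕ) (hk : k ≤ n) :
    A v w n k =
      ∑ f ∈ (Finset.univ : Finset (Fin (n - k) → Fin n)).filter
          (fun f => ∀ a b : Fin (n - k), a < b → f a < f b),
        ∏ j : Fin (n - k), (v (f j) + w ((f j : ℕ) - (j : ℕ))) := by
  show A v w n k = S v w n (n - k)
  induction n generalizing k with
  | zero =>
    interval_cases k
    simp [A, S_zero]
  | succ n ih =>
    match k, hk with
    | 0, _ =>
      have h1 : n + 1 - 0 = n + 1 := rfl
      rw [h1, S_succ, S_eq_zero v w (by omega), Nat.sub_self]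
      have := ih 0 (by omega)
      rw [Nat.sub_zero] at this
      rw [A, this]
      ring
    | k + 1, hk =>
      rcases Nat.lt_or_ge k n with hkn | hkn
      · have h1 : n + 1 - (k + 1) = (n - (k+1)) + 1 := by omega
        rw [h1, S_succ]
        have h2 : n - (n - (k+1)) = k + 1 := by omega
        rw [h2, ← ih (k+1) (by omega)]
        have h3 : n - (k+1) + 1 = n - k := by omega
        rw [h3, ← ih k (by omega), A]
      · have hk' : k = n := by omega
        subst hk'
        rw [Nat.sub_self, S_zero, A, A_eq_zero v w k (k+1) (by omega)]
        have := ih k (by omega)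
        rw [Nat.sub_self] at this
        rw [this, S_zero]
        ring
end

section
/- Let K be a commutative ring, v, w : ℕ → K, and A^{v,w}(n,k) defined by the recurrence A^{v,w}(n,k) = A^{v,w}(n-1,k-1) + (v_{n-1}+w_k)·A^{v,w}(n-1,k) with standard initial conditions. Then the convolution formula A^{v,w}(l+m, n) = ∑_{k=0}^{n} A^{v,w}(l,k) · A^{v_{+l}, w_{+k}}(m, n−k) holds, where for a sequence f, f_{+m} denotes the shifted sequence i ↦ f_{m+i}. -/
open Finset

lemma A_zero_zero {K : Type*} [CommRing K] (v w : ℕ → K) : A v w 0 0 = 1 := rfl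
lemma A_zero_succ {K : Type*} [CommRing K] (v w : ℕ → K) (k : ℕ) :
    A v w 0 (k + 1) = 0 := rfl
lemma A_succ_zero {K : Type*} [CommRing K] (v w : ℕ → K) (n : ℕ) :
    A v w (n + 1) 0 = (v n + w 0) * A v w n 0 := rfl
lemma A_succ_succ {K : Type*} [CommRing K] (v w : ℕ → K) (n k : ℕ) :
    A v w (n + 1) (k + 1) = A v w n k + (v n + w (k + 1)) * A v w n (k + 1) := rfl

theorem stmt_5 {K : Type*} [CommRing K] (v w : ℕ → K) (l m n : ℕ) :
    A v w (l + m) n =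
      ∑ k ∈ Finset.range (n + 1),
        A v w l k * A (fun i => v (l + i)) (fun i => w (k + i)) m (n - k) := by
  induction m generalizing n with
  | zero =>
      rw [Nat.add_zero, Finset.sum_eq_single n]
      · simp [A_zero_zero]
      · intro k hk hne
        have h : ∃ j, n - k = j + 1 := ⟨n - k - 1, by
          have := Finset.mem_range.mp hk; omega⟩
        obtain ⟨j, hj⟩ := h
        rw [hj, A_zero_succ, mul_zero]
      · intro h
        exact absurd (Finset.mem_range.mpr (Nat.lt_succ_self n)) h
  | succ m ih =>
      have hc : l + (m + 1) = (l + m) + 1 := by omega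
      rw [hc]
      cases n with
      | zero =>
          rw [Finset.sum_range_one, A_succ_zero, ih 0, Finset.sum_range_one]
          simp only [A_succ_zero, Nat.sub_self, Nat.add_zero]
          ring
      | succ n =>
          rw [A_succ_succ, ih n, ih (n + 1)]
          have key : ∀ k ∈ Finset.range (n + 1),
              A v w l k * A (fun i => v (l + i)) (fun i => w (k + i)) (m + 1) (n + 1 - k) =
                A v w l k * A (fun i => v (l + i)) (fun i => w (k + i)) m (n - k) +
                  (v (l + m) + w (n + 1)) *
                    (A v w l k * A (fun i => v (l + i)) (fun i => w (k + i)) m (n + 1 - k)) := by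
            intro k hk
            have hk' : k ≤ n := Nat.lt_succ_iff.mp (Finset.mem_range.mp hk)
            have h1 : n + 1 - k = (n - k) + 1 := by omega
            have h2 : k + (n - k + 1) = n + 1 := by omega
            rw [h1]
            simp only [A_succ_succ]
            rw [h2]
            ring
          conv_rhs => rw [Finset.sum_range_succ, Finset.sum_congr rfl key,
            Finset.sum_add_distrib, ← Finset.mul_sum]
          conv_lhs => rw [Finset.sum_range_succ (n := n + 1)]
          simp only [A_succ_succ, A_succ_zero, Nat.sub_self, Nat.add_zero]
          ring
end

section
/- Let K be a commutative ring, v, w : ℕ → K, and A^{v,w}(n,k) defined by the recurrence A^{v,w}(n,k) = A^{v,w}(n-1,k-1) + (v_{n-1}+w_k)·A^{v,w}(n-1,k) with standard initial conditions. Then A^{v,w}(n,k) = ∑_{j=k}^{n} (−1)^{j−k} A^{v,w}(n+1, j+1) · ∏_{i=k+1}^{j} (v_n + w_i). -/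
open Finset

theorem stmt_7 {K : Type*} [CommRing K] (v w : ℕ → K) (n k : ℕ) (hkn : k ≤ n) :
    A v w n k =
      ∑ j ∈ Finset.Icc k n,
        (-1 : K) ^ (j - k) * A v w (n + 1) (j + 1) * ∏ i ∈ Finset.Icc (k + 1) j, (v n + w i) := by
  have hz : ∀ n m : ℕ, n < m → A v w n m = 0 := by
    intro n
    induction n with
    | zero =>
      rintro (_ | m) h
      · omega
      · rfl
    | succ n ih =>
      rintro (_ | m) h
      · omega
      · show A v w n m + (v n + w (m + 1)) * A v w n (m + 1) = 0
        rw [ih m (by omega), ih (m + 1) (by omega)]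
        ring
  set f : ℕ → K := fun j => (-1 : K) ^ (j - k) * A v w n j * ∏ i ∈ Finset.Icc (k + 1) j, (v n + w i) with hf
  have key : ∀ j ∈ Finset.Icc k n,
      (-1 : K) ^ (j - k) * A v w (n + 1) (j + 1) * ∏ i ∈ Finset.Icc (k + 1) j, (v n + w i)
        = f j - f (j + 1) := by
    intro j hj
    rw [Finset.mem_Icc] at hj
    show (-1 : K) ^ (j - k) * (A v w n j + (v n + w (j + 1)) * A v w n (j + 1)) *
        ∏ i ∈ Finset.Icc (k + 1) j, (v n + w i) = _
    simp only [hf]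
    rw [Finset.prod_Icc_succ_top (by omega : k + 1 ≤ j + 1)]
    have h1 : j + 1 - k = (j - k) + 1 := by omega
    rw [h1, pow_succ]
    ring
  rw [Finset.sum_congr rfl key]
  have hIcc : Finset.Icc k n = Finset.Ico k (n + 1) := by
    rw [Finset.Ico_add_one_right_eq_Icc]
  rw [hIcc, Finset.sum_Ico_eq_sum_range]
  have := Finset.sum_range_sub' (fun i => f (k + i)) (n + 1 - k)
  simp only [add_zero] at this
  have heq : ∀ i, f (k + i) - f (k + (i + 1)) = f (k + i) - f (k + i + 1) := by
    intro i; rw [show k + (i + 1) = k + i + 1 by omega]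
  simp only [← heq] at this ⊢
  rw [this]
  have hk : k + (n + 1 - k) = n + 1 := by omega
  rw [hk]
  have hfk : f k = A v w n k := by
    simp [hf, Finset.Icc_eq_empty_of_lt (by omega : k < k + 1)]
  have hfn : f (n + 1) = 0 := by
    simp [hf, hz n (n + 1) (by omega)]
  rw [hfk, hfn, sub_zero]
end
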